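/- Let D be a finite symmetric subset of ℝ (D = -D) with 0 ∈ D and |D| ≥ 3. Then the set 4D² - 4D² = {x1+x2+x3+x4-x5-x6-x7-x8 : xi ∈ D²} contains the dilate 2·(D·D + D·D). -/

import Mathlib

open scoped Pointwise

private lemma key18 (A : Finset ℝ) (x : ℝ) (hx : x ∈ (A - A) * (A - A)) :
    ∃ p q r s : ℝ, p ∈ (A - A) ∧ q ∈ (A - A) ∧ r ∈ (A - A) ∧ s ∈ (A - A) ∧
      2 * x = p ^ 2 + q ^ 2 - (r ^ 2 + s ^ 2) := by
  rw [Finset.mem_mul] at hx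
  obtain ⟨d1, hd1, d2, hd2, rfl⟩ := hx
  rw [Finset.mem_sub] at hd1 hd2
  obtain ⟨a2, ha2, a1, ha1, rfl⟩ := hd1
  obtain ⟨b1, hb1, b2, hb2, rfl⟩ := hd2
  refine ⟨b1 - a1, b2 - a2, b1 - a2, b2 - a1, ?_, ?_, ?_, ?_, by ring⟩ <;>
    rw [Finset.mem_sub] <;> exact ⟨_, by assumption, _, by assumption, rfl⟩

/-- Let `D` be a finite symmetric subset of `ℝ` with `0 ∈ D` and `|D| ≥ 3`, arising as
a difference set `D = A - A`. Then `4D² - 4D²` contains the dilate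
`2 • (D·D + D·D)`. -/
theorem stmt_18 (D : Finset ℝ) (hsymm : D = -D) (h0 : (0 : ℝ) ∈ D)
    (hcard : 3 ≤ D.card) (hdiff : ∃ A : Finset ℝ, D = A - A) :
    (2 : ℝ) • (D * D + D * D) ⊆
      (D.image (· ^ 2) + D.image (· ^ 2) + D.image (· ^ 2) + D.image (· ^ 2))
        - (D.image (· ^ 2) + D.image (· ^ 2) + D.image (· ^ 2) + D.image (· ^ 2)) := by
  obtain ⟨A, rfl⟩ := hdiff
  intro t ht
  rw [Finset.mem_smul_finset] at ht
  obtain ⟨z, hz, rfl⟩ := ht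
  rw [Finset.mem_add] at hz
  obtain ⟨x, hx, y, hy, rfl⟩ := hz
  obtain ⟨p1, q1, r1, s1, hp1, hq1, hr1, hs1, e1⟩ := key18 A x hx
  obtain ⟨p2, q2, r2, s2, hp2, hq2, hr2, hs2, e2⟩ := key18 A y hy
  have hmem : ∀ u : ℝ, u ∈ (A - A) → u ^ 2 ∈ (A - A).image (· ^ 2) := fun u hu =>
    Finset.mem_image.mpr ⟨u, hu, rfl⟩
  rw [Finset.mem_sub]
  refine ⟨p1 ^ 2 + q1 ^ 2 + p2 ^ 2 + q2 ^ 2, ?_, r1 ^ 2 + s1 ^ 2 + r2 ^ 2 + s2 ^ 2, ?_, ?_⟩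
  · exact Finset.add_mem_add (Finset.add_mem_add (Finset.add_mem_add (hmem _ hp1) (hmem _ hq1))
      (hmem _ hp2)) (hmem _ hq2)
  · exact Finset.add_mem_add (Finset.add_mem_add (Finset.add_mem_add (hmem _ hr1) (hmem _ hs1))
      (hmem _ hr2)) (hmem _ hs2)
  · have : (2:ℝ) • (x + y) = 2 * x + 2 * y := by ring_nf
    rw [e1, e2] at this
    linarith [this]
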